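/- Lower bound on the interaction between a tube segment and its complement for regular configurations (Lemma 7.2): There exists a constant C < ∞, depending only on W, λ and g, such that for every γ ∈ ℕ with γ ≥ 1, every ℓ ∈ ℕ with ℓ ≤ n₁, every r ∈ (0, L₂), and every regular configuration ω: Σ_{j : (x_j,y_j) ∈ Y} Σ_{k : (x_k,y_k) ∉ Y} V₂(y_j, y_k; |x_j − x_k|) ≥ −C · γ · max_{−ℓ ≤ k ≤ R} n_k(ω). -/

import Mathlib

open Real MeasureTheory
open scoped ENNReal

lemma ereal_sum_le {ι : Type} (s : Finset ι) (f : ι → ℝ) (h : ι → EReal)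
    (hle : ∀ i ∈ s, (f i : EReal) ≤ h i) :
    ((∑ i ∈ s, f i : ℝ) : EReal) ≤ ∑ i ∈ s, h i := by
  classical
  induction s using Finset.cons_induction with
  | empty => simp
  | cons a s ha ih =>
      rw [Finset.sum_cons, Finset.sum_cons, EReal.coe_add]
      exact add_le_add (hle a (Finset.mem_cons_self a s))
        (ih fun i hi => hle i (Finset.mem_cons_of_mem hi))

lemma summable_B {lam : ℝ} (hlam : 0 < lam) {g : ℝ → ℝ}
    (hg0 : ∀ x : ℝ, 0 ≤ x → 0 ≤ g x)
    (hgd : ∀ ⦃x y : ℝ⦄, 0 ≤ x → x ≤ y → g y ≤ g x)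
    (hg_int : IntegrableOn (fun x => x * g x) (Set.Ici (0:ℝ))) :
    Summable (fun s : ℕ => (s : ℝ) * g (lam * s)) := by
  set J : ℝ := ∫ x in Set.Ici (0:ℝ), x * g x with hJ
  have hJ0 : 0 ≤ J := by
    apply setIntegral_nonneg measurableSet_Ici
    intro x hx
    exact mul_nonneg hx (hg0 x hx)
  set X : ℕ → ℝ := fun k => lam * ((k:ℝ)+1) with hX
  -- block integrability
  have hblock : ∀ i : ℕ, IntervalIntegrable (fun x => x * g x) volume (X i) (X (i+1)) := by
    intro i
    apply MeasureTheory.IntegrableOn.intervalIntegrable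
    apply hg_int.mono_set
    intro z hz
    rcases Set.mem_uIcc.1 hz with h | h
    · have : (0:ℝ) ≤ X i := by simp only [hX]; positivity
      exact le_trans this h.1
    · have : (0:ℝ) ≤ X (i+1) := by simp only [hX]; positivity
      exact le_trans this h.1
  have hXle : ∀ i : ℕ, X i ≤ X (i+1) := by
    intro i; simp only [hX]; push_cast; nlinarith
  have hX0 : ∀ i : ℕ, (0:ℝ) ≤ X i := by
    intro i; simp only [hX]; positivity
  -- block lower bound
  have hblockL : ∀ i : ℕ, lam * ((i:ℝ)+1) * g (X (i+1)) * lam ≤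
      ∫ x in (X i)..(X (i+1)), x * g x := by
    intro i
    have hmono := intervalIntegral.integral_mono_on
      (f := fun _ : ℝ => X i * g (X (i+1)))
      (g := fun x => x * g x) (μ := volume) (hXle i) intervalIntegrable_const (hblock i) ?_
    · calc lam * ((i:ℝ)+1) * g (X (i+1)) * lam
          = (X (i+1) - X i) • (X i * g (X (i+1))) := by
            simp only [hX, smul_eq_mul]; push_cast; ring
        _ = ∫ _ in (X i)..(X (i+1)), (X i * g (X (i+1))) := by
            rw [intervalIntegral.integral_const]
        _ ≤ _ := hmono
    · intro z hz
      have hgz : g (X (i+1)) ≤ g z := hgd (le_trans (hX0 i) hz.1) hz.2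
      have h1 : X i * g (X (i+1)) ≤ z * g (X (i+1)) :=
        mul_le_mul_of_nonneg_right hz.1 (hg0 _ (le_trans (hX0 (i+1)) le_rfl))
      refine le_trans h1 (mul_le_mul_of_nonneg_left hgz (le_trans (hX0 i) hz.1))
  -- partial sums of blocks bounded by J
  have hpartial : ∀ m : ℕ, ∑ i ∈ Finset.range m, (((i:ℝ)+1) * g (X (i+1))) ≤ J / lam^2 := by
    intro m
    have hsum : ∑ i ∈ Finset.range m, ∫ x in (X i)..(X (i+1)), x * g x
        = ∫ x in (X 0)..(X m), x * g x :=
      intervalIntegral.sum_integral_adjacent_intervals (fun k _ => hblock k)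
    have hint_le : ∫ x in (X 0)..(X m), x * g x ≤ J := by
      rw [intervalIntegral.integral_of_le]
      · apply MeasureTheory.setIntegral_mono_set hg_int
        · filter_upwards [ae_restrict_mem measurableSet_Ici] with z hz
          exact mul_nonneg hz (hg0 z hz)
        · exact Filter.Eventually.of_forall fun z hz => le_trans (hX0 0) hz.1.le
      · have : ∀ mm : ℕ, X 0 ≤ X mm := by
          intro mm
          induction mm with
          | zero => exact le_rfl
          | succ k ih => exact le_trans ih (hXle k)
        exact this m
    have hls : lam^2 * ∑ i ∈ Finset.range m, (((i:ℝ)+1) * g (X (i+1))) ≤ J := by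
      rw [Finset.mul_sum]
      calc ∑ i ∈ Finset.range m, lam^2 * (((i:ℝ)+1) * g (X (i+1)))
          ≤ ∑ i ∈ Finset.range m, ∫ x in (X i)..(X (i+1)), x * g x := by
            apply Finset.sum_le_sum
            intro i _
            calc lam^2 * (((i:ℝ)+1) * g (X (i+1)))
                = lam * ((i:ℝ)+1) * g (X (i+1)) * lam := by ring
              _ ≤ _ := hblockL i
        _ = _ := hsum
        _ ≤ J := hint_le
    rw [le_div_iff₀ (by positivity : (0:ℝ) < lam^2)]
    nlinarith [hls]
  -- now summability
  refine summable_of_sum_range_le (c := g 0 + 2 * (J / lam^2))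
    (fun n => mul_nonneg (Nat.cast_nonneg n) (hg0 _ (by positivity))) (fun n => ?_)
  have hg00 : 0 ≤ g 0 := hg0 0 le_rfl
  have hJl : 0 ≤ J / lam^2 := by positivity
  match n with
  | 0 => simpa using by positivity
  | 1 =>
      simp only [Finset.sum_range_succ, Finset.sum_range_zero, Nat.cast_zero, zero_mul,
        zero_add, Nat.cast_one, one_mul]
      have : g (lam * 1) ≤ g 0 := hgd le_rfl (by positivity)
      linarith
  | (m+2) =>
      rw [Finset.sum_range_succ' _ (m+1), Finset.sum_range_succ' _ m]
      have e0 : ((0:ℕ):ℝ) * g (lam * ((0:ℕ):ℝ)) = 0 := by norm_num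
      have e1 : (((0:ℕ)+1:ℕ):ℝ) * g (lam * (((0:ℕ)+1:ℕ):ℝ)) ≤ g 0 := by
        norm_num
        exact hgd le_rfl (by positivity)
      have e2 : ∑ i ∈ Finset.range m, ((((i+1)+1:ℕ)):ℝ) * g (lam * (((i+1)+1:ℕ):ℝ))
          ≤ 2 * (J / lam^2) := by
        have key : ∀ i : ℕ, ((((i+1)+1:ℕ)):ℝ) * g (lam * (((i+1)+1:ℕ):ℝ))
            ≤ 2 * (((i:ℝ)+1) * g (X (i+1))) := by
          intro i
          have hc : ((((i+1)+1:ℕ)):ℝ) = (i:ℝ) + 2 := by push_cast; ring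
          have hx : lam * (((i+1)+1:ℕ):ℝ) = X (i+1) := by
            simp only [hX]; push_cast; ring
          rw [hx, hc]
          have hgn : 0 ≤ g (X (i+1)) := hg0 _ (hX0 (i+1))
          nlinarith [Nat.cast_nonneg (α := ℝ) i]
        calc ∑ i ∈ Finset.range m, ((((i+1)+1:ℕ)):ℝ) * g (lam * (((i+1)+1:ℕ):ℝ))
            ≤ ∑ i ∈ Finset.range m, 2 * (((i:ℝ)+1) * g (X (i+1))) :=
              Finset.sum_le_sum (fun i _ => key i)
          _ = 2 * ∑ i ∈ Finset.range m, (((i:ℝ)+1) * g (X (i+1))) := by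
              rw [Finset.mul_sum]
          _ ≤ 2 * (J / lam^2) := by nlinarith [hpartial m]
      push_cast at e0 e1 e2 ⊢
      linarith [e0, e1, e2]

lemma summable_A {lam : ℝ} (hlam : 0 < lam) {g : ℝ → ℝ}
    (hg0 : ∀ x : ℝ, 0 ≤ x → 0 ≤ g x)
    (hgd : ∀ ⦃x y : ℝ⦄, 0 ≤ x → x ≤ y → g y ≤ g x)
    (hg_int : IntegrableOn (fun x => x * g x) (Set.Ici (0:ℝ))) :
    Summable (fun s : ℕ => g (lam * s)) := by
  have hB := summable_B hlam hg0 hgd hg_int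
  have hB1 : Summable (fun s : ℕ => ((s:ℝ)+1) * g (lam * ((s:ℝ)+1))) :=
    ((summable_nat_add_iff 1).2 hB).congr (fun b => by push_cast; ring_nf)
  have h : Summable (fun s : ℕ => g (lam * ((s:ℝ)+1))) := by
    apply Summable.of_nonneg_of_le (fun s => hg0 _ (by positivity)) (fun s => ?_) hB1
    have h1 : (1:ℝ) ≤ ((s:ℝ)+1) := by linarith [Nat.cast_nonneg (α := ℝ) s]
    nlinarith [hg0 (lam * ((s:ℝ)+1)) (by positivity)]
  exact (summable_nat_add_iff 1).1 (h.congr (fun b => by push_cast; ring_nf))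

lemma one_side {ι : Type} [Fintype ι] {lam : ℝ} (hlam : 0 < lam)
    {g : ℝ → ℝ} (hg0 : ∀ x : ℝ, 0 ≤ x → 0 ≤ g x)
    (hgd : ∀ ⦃x y : ℝ⦄, 0 ≤ x → x ≤ y → g y ≤ g x)
    (hA : Summable (fun s : ℕ => g (lam * s)))
    (hB : Summable (fun s : ℕ => (s : ℝ) * g (lam * s)))
    (M γ : ℕ) (hγ : 1 ≤ γ)
    (p q : ι → Prop) (u v : ι → ℝ) (d : ι → ι → ℝ)
    (P : Finset (ι × ι)) (hp : ∀ jk ∈ P, p jk.1 ∧ q jk.2)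
    (hu : ∀ j, p j → 0 ≤ u j) (hv : ∀ k, q k → 0 ≤ v k)
    (hd : ∀ j k, p j → q k → u j + v k ≤ d j k)
    (hAc : ∀ (a : ℕ) (S : Finset ι),
      (∀ j ∈ S, p j ∧ (a : ℝ) * lam ≤ u j ∧ u j < ((a : ℝ) + 1) * lam) → S.card ≤ 2 * M)
    (hBc : ∀ (s : ℕ) (S : Finset ι),
      (∀ k ∈ S, q k ∧ v k < ((s : ℝ) + 1) * lam) →
        (S.card : ℝ) ≤ 2 * ((s : ℝ) + 1) + 2 * γ + 1) :
    ∑ jk ∈ P, g (d jk.1 jk.2) ≤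
      (M : ℝ) * γ * (10 * (∑' s : ℕ, g (lam * s)) + 4 * ∑' s : ℕ, (s : ℝ) * g (lam * s)) := by
  classical
  set a : ι → ℕ := fun j => ⌊u j / lam⌋₊ with ha
  set b : ι → ℕ := fun k => ⌊v k / lam⌋₊ with hb
  set f : ℕ → ℝ := fun s => g (lam * s) with hf
  set sfun : ι × ι → ℕ := fun jk => a jk.1 + b jk.2 with hsfun
  -- floor facts
  have hfloor_le : ∀ (t : ℝ), 0 ≤ t → lam * (⌊t / lam⌋₊ : ℝ) ≤ t := by
    intro t ht
    have := Nat.floor_le (div_nonneg ht hlam.le)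
    calc lam * (⌊t / lam⌋₊ : ℝ) ≤ lam * (t / lam) :=
          mul_le_mul_of_nonneg_left this hlam.le
      _ = t := by field_simp
  have hfloor_lt : ∀ (t : ℝ), t < ((⌊t / lam⌋₊ : ℝ) + 1) * lam := by
    intro t
    have := Nat.lt_floor_add_one (t / lam)
    calc t = (t / lam) * lam := by field_simp
      _ < ((⌊t / lam⌋₊ : ℝ) + 1) * lam := by
          apply mul_lt_mul_of_pos_right this hlam
  -- Step 1: pointwise bound by the grid function
  have step1 : ∑ jk ∈ P, g (d jk.1 jk.2) ≤ ∑ jk ∈ P, f (sfun jk) := by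
    apply Finset.sum_le_sum; intro jk hjk
    obtain ⟨hpj, hqk⟩ := hp jk hjk
    apply hgd (by positivity)
    have h1 : lam * (a jk.1 : ℝ) ≤ u jk.1 := hfloor_le _ (hu _ hpj)
    have h2 : lam * (b jk.2 : ℝ) ≤ v jk.2 := hfloor_le _ (hv _ hqk)
    calc lam * ((sfun jk : ℕ) : ℝ) = lam * (a jk.1 : ℝ) + lam * (b jk.2 : ℝ) := by
          simp only [hsfun]; push_cast; ring
      _ ≤ u jk.1 + v jk.2 := add_le_add h1 h2
      _ ≤ d jk.1 jk.2 := hd _ _ hpj hqk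
  -- Step 2: group by sfun
  have step2 : ∑ jk ∈ P, f (sfun jk)
      = ∑ sv ∈ P.image sfun, (P.filter (fun jk => sfun jk = sv)).card • f sv :=
    Finset.sum_comp f sfun
  -- Step 3: cardinality bound for each fiber
  have step3 : ∀ sv : ℕ, ((P.filter (fun jk => sfun jk = sv)).card : ℝ) ≤
      2 * M * (2 * ((sv : ℝ) + 1) + 2 * γ + 1) := by
    intro sv
    set Q : Finset (ι × ι) := P.filter (fun jk => sfun jk = sv) with hQ
    have hmem : ∀ jk ∈ Q, (p jk.1 ∧ q jk.2) ∧ a jk.1 + b jk.2 = sv := by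
      intro jk hjk
      rw [hQ, Finset.mem_filter] at hjk
      exact ⟨hp jk hjk.1, hjk.2⟩
    have hcard : Q.card ≤ 2 * M * (Q.image Prod.snd).card := by
      apply Finset.card_le_mul_card_image
      intro k0 hk0
      set Fib := Q.filter (fun jk => jk.2 = k0) with hFib
      have himg : Fib.card = (Fib.image Prod.fst).card := by
        rw [eq_comm]
        apply Finset.card_image_of_injOn
        intro z hz w hw hzw
        rw [Finset.mem_coe, Finset.mem_filter] at hz hw
        exact Prod.ext hzw (hz.2.trans hw.2.symm)
      rw [himg]
      rcases Finset.mem_image.1 hk0 with ⟨jk0, hjk0, hjk0eq⟩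
      apply hAc (sv - b k0)
      intro j hj
      rcases Finset.mem_image.1 hj with ⟨z, hz, hzeq⟩
      rw [hFib, Finset.mem_filter] at hz
      rcases hz with ⟨hzQ, hz2⟩
      have hmemz := hmem z hzQ
      have hpz : p z.1 := hmemz.1.1
      have haz : a z.1 + b k0 = sv := by rw [← hz2]; exact hmemz.2
      have hble : b k0 ≤ sv := by omega
      have haz' : a z.1 = sv - b k0 := by omega
      subst hzeq
      refine ⟨hpz, ?_, ?_⟩
      · rw [← haz']
        have h1 : lam * (a z.1 : ℝ) ≤ u z.1 := hfloor_le _ (hu _ hpz)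
        linarith [h1]
      · rw [← haz']
        exact hfloor_lt (u z.1)
    have himgcard : ((Q.image Prod.snd).card : ℝ) ≤ 2 * ((sv : ℝ) + 1) + 2 * γ + 1 := by
      apply hBc sv
      intro k hk
      rcases Finset.mem_image.1 hk with ⟨z, hz, hzeq⟩
      have hmemz := hmem z hz
      have hqz : q z.2 := hmemz.1.2
      have hble : b z.2 ≤ sv := by omega
      subst hzeq
      refine ⟨hqz, ?_⟩
      have h2 := hfloor_lt (v z.2)
      calc v z.2 < ((b z.2 : ℝ) + 1) * lam := h2
        _ ≤ ((sv : ℝ) + 1) * lam := by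
            apply mul_le_mul_of_nonneg_right _ hlam.le
            have : (b z.2 : ℝ) ≤ sv := by exact_mod_cast hble
            linarith
    calc ((Q.card : ℕ) : ℝ) ≤ ((2 * M * (Q.image Prod.snd).card : ℕ) : ℝ) := by
          exact_mod_cast hcard
      _ = (2 * M : ℝ) * ((Q.image Prod.snd).card : ℝ) := by push_cast; ring
      _ ≤ (2 * M : ℝ) * (2 * ((sv : ℝ) + 1) + 2 * γ + 1) := by
          apply mul_le_mul_of_nonneg_left himgcard (by positivity)
  -- Step 4: compare with the tsum
  set φ : ℕ → ℝ := fun s => ((M : ℝ) * γ) * (10 * g (lam * s) + 4 * ((s : ℝ) * g (lam * s)))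
    with hφ
  have hφ_sum : Summable φ := ((hA.mul_left 10).add (hB.mul_left 4)).mul_left _
  have hφ0 : ∀ s : ℕ, 0 ≤ φ s := by
    intro s
    have hgs := hg0 (lam * s) (by positivity)
    have h2 : (0:ℝ) ≤ (s : ℝ) := Nat.cast_nonneg s
    simp only [hφ]
    have h1 : (0:ℝ) ≤ (M : ℝ) * γ := by positivity
    exact mul_nonneg h1 (by nlinarith [mul_nonneg h2 hgs])
  have step4 : ∑ sv ∈ P.image sfun, (P.filter (fun jk => sfun jk = sv)).card • f sv
      ≤ ∑' s : ℕ, φ s := by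
    have h1 : ∑ sv ∈ P.image sfun, (P.filter (fun jk => sfun jk = sv)).card • f sv
        ≤ ∑ sv ∈ P.image sfun, φ sv := by
      apply Finset.sum_le_sum
      intro sv _
      rw [nsmul_eq_mul]
      have hfnn : 0 ≤ f sv := hg0 _ (by positivity)
      have hcoef : 2 * (M:ℝ) * (2 * ((sv : ℝ) + 1) + 2 * γ + 1) ≤
          (M : ℝ) * γ * (10 + 4 * (sv : ℝ)) := by
        have hγ1 : (1:ℝ) ≤ (γ:ℝ) := by exact_mod_cast hγ
        have hM : (0:ℝ) ≤ (M:ℝ) := Nat.cast_nonneg M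
        have hs : (0:ℝ) ≤ (sv:ℝ) := Nat.cast_nonneg sv
        nlinarith [mul_nonneg (mul_nonneg hM hs) (sub_nonneg.2 hγ1),
          mul_nonneg hM (sub_nonneg.2 hγ1)]
      calc ((P.filter (fun jk => sfun jk = sv)).card : ℝ) * f sv
          ≤ (2 * M * (2 * ((sv : ℝ) + 1) + 2 * γ + 1)) * f sv := by
            apply mul_le_mul_of_nonneg_right (step3 sv) hfnn
        _ ≤ ((M : ℝ) * γ * (10 + 4 * (sv : ℝ))) * f sv := by
            apply mul_le_mul_of_nonneg_right hcoef hfnn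
        _ = φ sv := by rw [hφ, hf]; ring
    exact le_trans h1 (Summable.sum_le_tsum _ (fun s _ => hφ0 s) hφ_sum)
  have htsum : ∑' s : ℕ, φ s =
      (M : ℝ) * γ * (10 * (∑' s : ℕ, g (lam * s)) + 4 * ∑' s : ℕ, (s : ℝ) * g (lam * s)) := by
    rw [hφ, tsum_mul_left]
    congr 1
    rw [Summable.tsum_add (hA.mul_left 10) (hB.mul_left 4), tsum_mul_left, tsum_mul_left]
  calc ∑ jk ∈ P, g (d jk.1 jk.2)
      ≤ ∑ jk ∈ P, f (sfun jk) := step1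
    _ = ∑ sv ∈ P.image sfun, (P.filter (fun jk => sfun jk = sv)).card • f sv := step2
    _ ≤ ∑' s : ℕ, φ s := step4
    _ = _ := htsum

set_option maxHeartbeats 2000000 in
/-- Lower bound on the interaction between a tube segment and its complement for regular
configurations (Lemma 7.2): there is `C < ∞`, depending only on `W`, `λ` and `g`, such
that for every `γ ≥ 1`, `ℓ ≤ n₁`, `r ∈ (0, L₂)` and every regular configuration `ω`,
`Σ_{j ∈ Y} Σ_{k ∉ Y} V₂(y_j, y_k; |x_j - x_k|) ≥ -C γ max_{-ℓ ≤ k ≤ R} n_k(ω)`. -/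
theorem segment_complement_interaction_bound
    (W lam : ℝ) (hW : 0 < W) (hlam : lam = 1 / W)
    (g : ℝ → ℝ) (hg_nonneg : ∀ x : ℝ, 0 ≤ x → 0 ≤ g x)
    (hg_dec : ∀ ⦃x y : ℝ⦄, 0 ≤ x → x ≤ y → g y ≤ g x)
    (hg_int : IntegrableOn (fun x => x * g x) (Set.Ici (0:ℝ))) :
    ∃ C : ℝ, 0 < C ∧
      ∀ (D : Type) [MeasurableSpace D] (ν : Measure D),
        ν Set.univ = ENNReal.ofReal W →
        ∀ V₂ : D → D → ℝ → EReal,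
          (Measurable fun p : D × D × ℝ => V₂ p.1 p.2.1 p.2.2) →
          (∀ (y y' : D) (x : ℝ), V₂ y y' x = V₂ y' y x) →
          (∀ x : ℝ, 0 < x → ∀ y' : D,
            (∀ᵐ y ∂ν, V₂ y y' x ≠ ⊤) ∧
            Integrable (fun y => (V₂ y y' x).toReal) ν ∧
            ∫ y, (V₂ y y' x).toReal ∂ν = 0) →
          (∀ (y y' : D) (x : ℝ), 0 < x → (↑(-g x) : EReal) ≤ V₂ y y' x) →
          (∀ ε : ℝ, 0 < ε → ∃ c : ℝ, ∀ (y y' : D) (x : ℝ), ε ≤ x →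
            V₂ y y' x ≤ (↑(c * g x) : EReal)) →
          ∀ (n₁ n₂ γ ℓ : ℕ), 1 ≤ γ → ℓ ≤ n₁ →
            ∀ r : ℝ, 0 < r → r < (n₂ : ℝ) * lam →
              let N : ℕ := n₁ + n₂
              let L₁ : ℝ := -(n₁ : ℝ) * lam
              let L₂ : ℝ := (n₂ : ℝ) * lam
              let R : ℤ := ⌊r / lam⌋
              ∀ (x : Fin N → ℝ) (y : Fin N → D),
                StrictMono x → (∀ j, x j ∈ Set.Ioo L₁ L₂) →
                let K : ℝ → ℝ := fun u =>
                  if u ∈ Set.Icc L₁ L₂ then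
                    (u - L₁) / lam - (Nat.card {j : Fin N // x j ≤ u} : ℝ)
                  else 0
                let n : ℤ → ℕ := fun k =>
                  if k < R then
                    Nat.card {j : Fin N // x j ∈ Set.Ico ((k : ℝ) * lam) (((k : ℝ) + 1) * lam)}
                  else Nat.card {j : Fin N // x j ∈ Set.Icc ((R : ℝ) * lam) r}
                -- regularity of the configuration:
                K (-(ℓ : ℝ) * lam) = γ →
                (γ : ℝ) < (r - L₁) / lam - (Nat.card {j : Fin N // x j < r} : ℝ) →
                K r ≤ γ →
                (∀ t : ℝ, t ∉ Set.Icc (-(ℓ : ℝ) * lam) r →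
                  |K t| ≤ (γ : ℝ) +
                    Metric.infDist t (Set.Icc (-(ℓ : ℝ) * lam) ((R : ℝ) * lam)) / lam) →
                (↑(-(C * (γ : ℝ) *
                      (((Finset.Icc (-(ℓ : ℤ)) R).sup n : ℕ) : ℝ))) : EReal) ≤
                  ∑ j : Fin N, ∑ k : Fin N,
                    if x j ∈ Set.Icc (-(ℓ : ℝ) * lam) r ∧ x k ∉ Set.Icc (-(ℓ : ℝ) * lam) r
                    then V₂ (y j) (y k) |x j - x k| else 0 := by

  classical
  have hlam0 : 0 < lam := by rw [hlam]; positivity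
  have hA := summable_A hlam0 hg_nonneg hg_dec hg_int
  have hB := summable_B hlam0 hg_nonneg hg_dec hg_int
  set A : ℝ := ∑' s : ℕ, g (lam * s) with hAdef
  set B : ℝ := ∑' s : ℕ, (s : ℝ) * g (lam * s) with hBdef
  have hA0 : 0 ≤ A := tsum_nonneg (fun s => hg_nonneg _ (by positivity))
  have hB0 : 0 ≤ B := tsum_nonneg (fun s =>
    mul_nonneg (Nat.cast_nonneg s) (hg_nonneg _ (by positivity)))
  refine ⟨20 * A + 8 * B + 1, by linarith, ?_⟩
  intro D _ ν hν V₂ hVmeas hVsymm hVneut hVlow hVupp n₁ n₂ γ ℓ hγ hℓ r hr hrL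
  intro N L₁ L₂ R x y hxmono hxmem K nn hK1 hK2 hK3 hK4
  set C : ℝ := 20 * A + 8 * B + 1 with hC
  set M : ℕ := (Finset.Icc (-(ℓ : ℤ)) R).sup nn with hM
  -- basic facts
  have hL1 : L₁ = -(n₁ : ℝ) * lam := rfl
  have hL2 : L₂ = (n₂ : ℝ) * lam := rfl
  have hRdef : R = ⌊r / lam⌋ := rfl
  have hRle : (R : ℝ) * lam ≤ r := by
    have h := Int.floor_le (r / lam)
    rw [hRdef]
    calc (↑⌊r / lam⌋ : ℝ) * lam ≤ (r / lam) * lam := mul_le_mul_of_nonneg_right h hlam0.le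
      _ = r := by field_simp
  have hrR : r < ((R : ℝ) + 1) * lam := by
    have h := Int.lt_floor_add_one (r / lam)
    rw [hRdef]
    calc r = (r / lam) * lam := by field_simp
      _ < ((↑⌊r / lam⌋ : ℝ) + 1) * lam := mul_lt_mul_of_pos_right h hlam0
  have hR0 : (0 : ℤ) ≤ R := by
    rw [hRdef]; exact Int.floor_nonneg.mpr (div_nonneg hr.le hlam0.le)
  have hlnn : (0:ℝ) ≤ (ℓ:ℝ) := Nat.cast_nonneg ℓ
  have hcle0 : -(ℓ : ℝ) * lam ≤ 0 := by nlinarith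
  have hcR : -(ℓ : ℝ) * lam ≤ (R : ℝ) * lam := by
    have h1 : (0:ℝ) ≤ (R:ℝ) := by exact_mod_cast hR0
    nlinarith
  have hL1le : L₁ ≤ -(ℓ : ℝ) * lam := by
    rw [hL1]
    have h1 : (ℓ : ℝ) ≤ (n₁ : ℝ) := by exact_mod_cast hℓ
    nlinarith
  have hL1r : L₁ ≤ 0 := by
    rw [hL1]
    have := Nat.cast_nonneg (α := ℝ) n₁
    nlinarith
  have hL2pos : 0 < L₂ := hr.trans hrL
  have hγ0 : (0:ℝ) ≤ (γ:ℝ) := Nat.cast_nonneg γ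
  -- counting machinery
  have hNat : ∀ p : Fin N → Prop, (Nat.card {j : Fin N // p j}) =
      (Finset.univ.filter p).card := by
    intro p
    simp [Nat.card_eq_fintype_card, Fintype.card_subtype]
  set F : ℝ → ℕ := fun t => (Finset.univ.filter (fun j => x j ≤ t)).card with hFdef
  have hKval : ∀ t, t ∈ Set.Icc L₁ L₂ → K t = (t - L₁) / lam - (F t : ℝ) := by
    intro t ht
    show (if t ∈ Set.Icc L₁ L₂ then
        (t - L₁) / lam - (Nat.card {j : Fin N // x j ≤ t} : ℝ) else 0) = _
    rw [if_pos ht, hNat (fun j => x j ≤ t)]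
  have hFc : ((F (-(ℓ : ℝ) * lam)) : ℝ) = ((n₁ : ℝ) - ℓ) - γ := by
    have hmem : -(ℓ : ℝ) * lam ∈ Set.Icc L₁ L₂ := ⟨hL1le, le_trans hcle0 hL2pos.le⟩
    have h1 := hKval _ hmem
    have h2 : (-(ℓ : ℝ) * lam - L₁) / lam = (n₁ : ℝ) - ℓ := by
      rw [hL1]; field_simp; ring
    rw [hK1] at h1
    rw [h2] at h1
    linarith
  have hFr : (r - L₁) / lam - γ ≤ (F r : ℝ) := by
    have hmem : r ∈ Set.Icc L₁ L₂ := ⟨le_trans hL1r hr.le, hrL.le⟩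
    have h := hKval r hmem
    rw [h] at hK3
    linarith
  have hFub_right : ∀ t, r < t → t ≤ L₂ →
      (F t : ℝ) ≤ (t - L₁) / lam + γ + (t - (R : ℝ) * lam) / lam := by
    intro t h1 h2
    have hmem : t ∈ Set.Icc L₁ L₂ := ⟨le_trans hL1r (le_trans hr.le h1.le), h2⟩
    have hnot : t ∉ Set.Icc (-(ℓ : ℝ) * lam) r := by
      rw [Set.mem_Icc]; rintro ⟨-, hh⟩; linarith
    have h4 := hK4 t hnot
    have hd : Metric.infDist t (Set.Icc (-(ℓ : ℝ) * lam) ((R : ℝ) * lam)) ≤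
        t - (R : ℝ) * lam := by
      have hmemR : (R : ℝ) * lam ∈ Set.Icc (-(ℓ : ℝ) * lam) ((R : ℝ) * lam) :=
        ⟨hcR, le_rfl⟩
      have hh := Metric.infDist_le_dist_of_mem (x := t) hmemR
      rwa [Real.dist_eq, abs_of_nonneg (by linarith)] at hh
    have h5 : |K t| ≤ γ + (t - (R : ℝ) * lam) / lam := by
      refine le_trans h4 ?_
      have : Metric.infDist t (Set.Icc (-(ℓ : ℝ) * lam) ((R : ℝ) * lam)) / lam ≤
          (t - (R : ℝ) * lam) / lam := by gcongr
      linarith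
    have habs : -(K t) ≤ γ + (t - (R : ℝ) * lam) / lam :=
      le_trans (neg_le_abs (K t)) h5
    have hkf := hKval t hmem
    have : (F t : ℝ) = (t - L₁) / lam - K t := by rw [hkf]; ring
    rw [this]; linarith
  have hFlb_left : ∀ t, L₁ ≤ t → t < -(ℓ : ℝ) * lam →
      (t - L₁) / lam - γ - (-(ℓ : ℝ) * lam - t) / lam ≤ (F t : ℝ) := by
    intro t h1 h2
    have hmem : t ∈ Set.Icc L₁ L₂ := ⟨h1, by linarith [le_trans hcle0 hL2pos.le]⟩
    have hnot : t ∉ Set.Icc (-(ℓ : ℝ) * lam) r := by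
      rw [Set.mem_Icc]; rintro ⟨hh, -⟩; linarith
    have h4 := hK4 t hnot
    have hd : Metric.infDist t (Set.Icc (-(ℓ : ℝ) * lam) ((R : ℝ) * lam)) ≤
        -(ℓ : ℝ) * lam - t := by
      have hmemc : -(ℓ : ℝ) * lam ∈ Set.Icc (-(ℓ : ℝ) * lam) ((R : ℝ) * lam) :=
        ⟨le_rfl, hcR⟩
      have hh := Metric.infDist_le_dist_of_mem (x := t) hmemc
      rwa [Real.dist_eq, abs_of_nonpos (by linarith), neg_sub] at hh
    have h5 : |K t| ≤ γ + (-(ℓ : ℝ) * lam - t) / lam := by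
      refine le_trans h4 ?_
      have : Metric.infDist t (Set.Icc (-(ℓ : ℝ) * lam) ((R : ℝ) * lam)) / lam ≤
          (-(ℓ : ℝ) * lam - t) / lam := by gcongr
      linarith
    have habs : K t ≤ γ + (-(ℓ : ℝ) * lam - t) / lam := le_trans (le_abs_self (K t)) h5
    have hkf := hKval t hmem
    have : (F t : ℝ) = (t - L₁) / lam - K t := by rw [hkf]; ring
    rw [this]; linarith
  have hsand : ∀ (lo hi : ℝ) (S : Finset (Fin N)), lo ≤ hi →
      (∀ k ∈ S, lo < x k ∧ x k ≤ hi) → S.card + F lo ≤ F hi := by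
    intro lo hi S hlh hS
    have hdisj : Disjoint S (Finset.univ.filter (fun j => x j ≤ lo)) := by
      rw [Finset.disjoint_left]; intro k hk hk2
      rw [Finset.mem_filter] at hk2
      exact absurd hk2.2 (not_le.2 (hS k hk).1)
    have hsub : S ∪ Finset.univ.filter (fun j => x j ≤ lo) ⊆
        Finset.univ.filter (fun j => x j ≤ hi) := by
      intro k hk
      rw [Finset.mem_union] at hk
      rw [Finset.mem_filter]
      rcases hk with hk | hk
      · exact ⟨Finset.mem_univ k, (hS k hk).2⟩
      · rw [Finset.mem_filter] at hk; exact ⟨hk.1, le_trans hk.2 hlh⟩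
    calc S.card + (Finset.univ.filter (fun j => x j ≤ lo)).card
        = (S ∪ Finset.univ.filter (fun j => x j ≤ lo)).card :=
          (Finset.card_union_of_disjoint hdisj).symm
      _ ≤ F hi := Finset.card_le_card hsub
  -- outer counting bounds
  have hBcR : ∀ (s : ℕ) (S : Finset (Fin N)),
      (∀ k ∈ S, r < x k ∧ x k - r < ((s : ℝ) + 1) * lam) →
      (S.card : ℝ) ≤ 2 * ((s : ℝ) + 1) + 2 * γ + 1 := by
    intro s S hS
    have hσ0 : 0 < ((s : ℝ) + 1) * lam := by positivity
    set t' : ℝ := min (r + ((s : ℝ) + 1) * lam) L₂ with ht'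
    have hrt' : r < t' := lt_min (by linarith) hrL
    have h1 : S.card + F r ≤ F t' := by
      apply hsand r t' S hrt'.le
      intro k hk
      exact ⟨(hS k hk).1, le_min (by linarith [(hS k hk).2]) (hxmem k).2.le⟩
    have h2 := hFub_right t' hrt' (min_le_right _ _)
    have h3 : (S.card : ℝ) + (F r : ℝ) ≤ (F t' : ℝ) := by exact_mod_cast h1
    have h4 : t' ≤ r + ((s : ℝ) + 1) * lam := min_le_left _ _
    have heq : (t' - L₁) / lam - (r - L₁) / lam = (t' - r) / lam := by
      field_simp
      ring
    have e2 : (t' - r) / lam ≤ (s : ℝ) + 1 := by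
      rw [div_le_iff₀ hlam0]; linarith
    have e3 : (t' - (R : ℝ) * lam) / lam ≤ (s : ℝ) + 2 := by
      rw [div_le_iff₀ hlam0]
      have hexp : ((s : ℝ) + 2) * lam = lam + ((s : ℝ) + 1) * lam := by ring
      rw [hexp]
      linarith [hrR]
    linarith [h2, h3, hFr, heq, e2, e3]
  have hBcL : ∀ (s : ℕ) (S : Finset (Fin N)),
      (∀ k ∈ S, x k < -(ℓ : ℝ) * lam ∧ -(ℓ : ℝ) * lam - x k < ((s : ℝ) + 1) * lam) →
      (S.card : ℝ) ≤ 2 * ((s : ℝ) + 1) + 2 * γ + 1 := by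
    intro s S hS
    have hσ0 : 0 < ((s : ℝ) + 1) * lam := by positivity
    set t' : ℝ := max (-(ℓ : ℝ) * lam - ((s : ℝ) + 1) * lam) L₁ with ht'
    have h1 : S.card + F t' ≤ F (-(ℓ : ℝ) * lam) := by
      apply hsand t' _ S (max_le (by linarith) hL1le)
      intro k hk
      exact ⟨max_lt (by linarith [(hS k hk).2]) (hxmem k).1, (hS k hk).1.le⟩
    have h3 : (S.card : ℝ) + (F t' : ℝ) ≤ ((n₁ : ℝ) - ℓ) - γ := by
      rw [← hFc]; exact_mod_cast h1
    rcases le_or_gt (-(ℓ : ℝ) * lam - ((s : ℝ) + 1) * lam) L₁ with hcase | hcase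
    · have hF0 : (0:ℝ) ≤ (F t' : ℝ) := Nat.cast_nonneg _
      have hnl : ((n₁ : ℝ) - ℓ) * lam ≤ ((s : ℝ) + 1) * lam := by
        have e : ((n₁ : ℝ) - ℓ) * lam = -(ℓ : ℝ) * lam - (-(n₁ : ℝ) * lam) := by ring
        rw [e, ← hL1]
        linarith
      have hnl2 : (n₁ : ℝ) - ℓ ≤ (s : ℝ) + 1 :=
        le_of_mul_le_mul_right (by linarith) hlam0
      linarith
    · have ht'eq : t' = -(ℓ : ℝ) * lam - ((s : ℝ) + 1) * lam := max_eq_left hcase.le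
      have hlb := hFlb_left t' (by rw [ht'eq]; linarith) (by rw [ht'eq]; linarith)
      have e1 : (-(ℓ : ℝ) * lam - t') / lam = (s : ℝ) + 1 := by
        rw [ht'eq]
        have e : -(ℓ : ℝ) * lam - (-(ℓ : ℝ) * lam - ((s : ℝ) + 1) * lam)
            = ((s : ℝ) + 1) * lam := by ring
        rw [e]
        field_simp
      have e2 : (t' - L₁) / lam = (n₁ : ℝ) - ℓ - ((s : ℝ) + 1) := by
        rw [ht'eq, hL1]
        field_simp
        ring
      linarith
  -- cell counting
  set Tcell : ℤ → Finset (Fin N) := fun v => Finset.univ.filter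
    (fun j => x j ∈ Set.Icc (-(ℓ : ℝ) * lam) r ∧ (v : ℝ) * lam ≤ x j ∧
      x j < ((v : ℝ) + 1) * lam) with hTcell
  have hnnval : ∀ v : ℤ, v < R → nn v = (Finset.univ.filter
      (fun j => x j ∈ Set.Ico ((v : ℝ) * lam) (((v : ℝ) + 1) * lam))).card := by
    intro v hv
    show (if v < R then Nat.card {j : Fin N // x j ∈ Set.Ico ((v : ℝ) * lam)
        (((v : ℝ) + 1) * lam)} else Nat.card {j : Fin N // x j ∈ Set.Icc ((R : ℝ) * lam) r}) = _
    rw [if_pos hv, hNat]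
    simp [Finset.filter_congr_decidable]
  have hnnvalR : nn R = (Finset.univ.filter
      (fun j => x j ∈ Set.Icc ((R : ℝ) * lam) r)).card := by
    show (if R < R then Nat.card {j : Fin N // x j ∈ Set.Ico ((R : ℝ) * lam)
        (((R : ℝ) + 1) * lam)} else Nat.card {j : Fin N // x j ∈ Set.Icc ((R : ℝ) * lam) r}) = _
    rw [if_neg (lt_irrefl R), hNat]
    simp [Finset.filter_congr_decidable]
  have hcell : ∀ v : ℤ, (Tcell v).card ≤ M := by
    intro v
    rcases Finset.eq_empty_or_nonempty (Tcell v) with hemp | hne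
    · rw [hemp]; simp
    · obtain ⟨j0, hj0⟩ := hne
      rw [hTcell, Finset.mem_filter] at hj0
      obtain ⟨-, hmemt, hlo, hhi⟩ := hj0
      rw [Set.mem_Icc] at hmemt
      have hv1 : -(ℓ : ℤ) ≤ v := by
        have h1 : -(ℓ : ℝ) * lam < ((v : ℝ) + 1) * lam := lt_of_le_of_lt hmemt.1 hhi
        have h2 : -(ℓ : ℝ) < (v : ℝ) + 1 := lt_of_mul_lt_mul_right h1 hlam0.le
        have h3 : (-(ℓ : ℤ) : ℝ) < ((v + 1 : ℤ) : ℝ) := by push_cast; linarith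
        have h4 : -(ℓ : ℤ) < v + 1 := by exact_mod_cast h3
        omega
      have hv2 : v ≤ R := by
        have hvr : (v : ℝ) * lam ≤ r := le_trans hlo hmemt.2
        have h1 : (v : ℝ) ≤ r / lam := (le_div_iff₀ hlam0).2 hvr
        rw [hRdef]; exact Int.le_floor.2 h1
      have hcard : (Tcell v).card ≤ nn v := by
        rcases lt_or_eq_of_le hv2 with hvR | hvR
        · rw [hnnval v hvR]
          apply Finset.card_le_card
          intro j hj
          rw [hTcell, Finset.mem_filter] at hj
          rw [Finset.mem_filter]
          exact ⟨hj.1, Set.mem_Ico.2 ⟨hj.2.2.1, hj.2.2.2⟩⟩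
        · rw [hvR, hnnvalR]
          apply Finset.card_le_card
          intro j hj
          rw [hTcell, Finset.mem_filter] at hj
          rw [Finset.mem_filter]
          rw [Set.mem_Icc] at hj
          refine ⟨hj.1, Set.mem_Icc.2 ⟨?_, ?_⟩⟩
          · exact hj.2.2.1
          · exact hj.2.1.2
      exact le_trans hcard (Finset.le_sup (Finset.mem_Icc.2 ⟨hv1, hv2⟩))
  have hwindow : ∀ (c : ℤ) (S : Finset (Fin N)),
      (∀ j ∈ S, x j ∈ Set.Icc (-(ℓ : ℝ) * lam) r ∧ (c : ℝ) * lam ≤ x j ∧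
        x j < ((c : ℝ) + 2) * lam) → S.card ≤ 2 * M := by
    intro c S hS
    have hsub : S ⊆ Tcell c ∪ Tcell (c + 1) := by
      intro j hj
      obtain ⟨hmemt, hlo, hhi⟩ := hS j hj
      rw [Finset.mem_union, hTcell, Finset.mem_filter, Finset.mem_filter]
      by_cases hcase : x j < ((c : ℝ) + 1) * lam
      · left; exact ⟨Finset.mem_univ j, hmemt, hlo, hcase⟩
      · right
        push_neg at hcase
        refine ⟨Finset.mem_univ j, hmemt, ?_, ?_⟩
        · push_cast; linarith
        · push_cast; linarith
    calc S.card ≤ (Tcell c ∪ Tcell (c + 1)).card := Finset.card_le_card hsub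
      _ ≤ (Tcell c).card + (Tcell (c + 1)).card := Finset.card_union_le _ _
      _ ≤ M + M := add_le_add (hcell c) (hcell (c + 1))
      _ = 2 * M := by omega
  have hAcR : ∀ (a : ℕ) (S : Finset (Fin N)),
      (∀ j ∈ S, (x j ∈ Set.Icc (-(ℓ : ℝ) * lam) r) ∧ (a : ℝ) * lam ≤ r - x j ∧
        r - x j < ((a : ℝ) + 1) * lam) → S.card ≤ 2 * M := by
    intro a S hS
    apply hwindow (R - ((a : ℤ) + 1)) S
    intro j hj
    obtain ⟨hmemt, h1, h2⟩ := hS j hj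
    refine ⟨hmemt, ?_, ?_⟩
    · push_cast
      have e : ((R : ℝ) - ((a : ℝ) + 1)) * lam = (R : ℝ) * lam - ((a : ℝ) + 1) * lam := by
        ring
      rw [e]; linarith
    · push_cast
      have e : ((R : ℝ) - ((a : ℝ) + 1) + 2) * lam
          = ((R : ℝ) + 1) * lam - (a : ℝ) * lam := by ring
      rw [e]; linarith
  have hAcL : ∀ (a : ℕ) (S : Finset (Fin N)),
      (∀ j ∈ S, (x j ∈ Set.Icc (-(ℓ : ℝ) * lam) r) ∧
        (a : ℝ) * lam ≤ x j + (ℓ : ℝ) * lam ∧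
        x j + (ℓ : ℝ) * lam < ((a : ℝ) + 1) * lam) → S.card ≤ 2 * M := by
    intro a S hS
    apply hwindow ((a : ℤ) - (ℓ : ℤ)) S
    intro j hj
    obtain ⟨hmemt, h1, h2⟩ := hS j hj
    refine ⟨hmemt, ?_, ?_⟩
    · push_cast
      have e : ((a : ℝ) - (ℓ : ℝ)) * lam = (a : ℝ) * lam - (ℓ : ℝ) * lam := by ring
      rw [e]; linarith
    · push_cast
      have e : ((a : ℝ) - (ℓ : ℝ) + 2) * lam
          = (((a : ℝ) + 1) * lam - (ℓ : ℝ) * lam) + lam := by ring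
      rw [e]; linarith
  -- apply the one-sided bounds
  set PR : Finset (Fin N × Fin N) := (Finset.univ ×ˢ Finset.univ).filter
    (fun jk => x jk.1 ∈ Set.Icc (-(ℓ : ℝ) * lam) r ∧ r < x jk.2) with hPR
  set PL : Finset (Fin N × Fin N) := (Finset.univ ×ˢ Finset.univ).filter
    (fun jk => x jk.1 ∈ Set.Icc (-(ℓ : ℝ) * lam) r ∧ x jk.2 < -(ℓ : ℝ) * lam) with hPL
  have hRight := one_side hlam0 hg_nonneg hg_dec hA hB M γ hγ
    (fun j => x j ∈ Set.Icc (-(ℓ : ℝ) * lam) r) (fun k => r < x k)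
    (fun j => r - x j) (fun k => x k - r) (fun j k => |x j - x k|) PR
    (fun jk hjk => (Finset.mem_filter.1 hjk).2)
    (fun j hj => by
      have hj' : -(ℓ : ℝ) * lam ≤ x j ∧ x j ≤ r := hj
      show (0:ℝ) ≤ r - x j
      linarith [hj'.2])
    (fun k hk => by
      have hk' : r < x k := hk
      show (0:ℝ) ≤ x k - r
      linarith)
    (fun j k hj hk => by
      show (r - x j) + (x k - r) ≤ |x j - x k|
      calc (r - x j) + (x k - r) = x k - x j := by ring
        _ ≤ |x k - x j| := le_abs_self _
        _ = |x j - x k| := abs_sub_comm _ _)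
    hAcR hBcR
  have hLeft := one_side hlam0 hg_nonneg hg_dec hA hB M γ hγ
    (fun j => x j ∈ Set.Icc (-(ℓ : ℝ) * lam) r) (fun k => x k < -(ℓ : ℝ) * lam)
    (fun j => x j + (ℓ : ℝ) * lam) (fun k => -(ℓ : ℝ) * lam - x k)
    (fun j k => |x j - x k|) PL
    (fun jk hjk => (Finset.mem_filter.1 hjk).2)
    (fun j hj => by
      have hj' : -(ℓ : ℝ) * lam ≤ x j ∧ x j ≤ r := hj
      show (0:ℝ) ≤ x j + (ℓ : ℝ) * lam
      linarith [hj'.1])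
    (fun k hk => by
      have hk' : x k < -(ℓ : ℝ) * lam := hk
      show (0:ℝ) ≤ -(ℓ : ℝ) * lam - x k
      linarith)
    (fun j k hj hk => by
      show (x j + (ℓ : ℝ) * lam) + (-(ℓ : ℝ) * lam - x k) ≤ |x j - x k|
      calc (x j + (ℓ : ℝ) * lam) + (-(ℓ : ℝ) * lam - x k) = x j - x k := by ring
        _ ≤ |x j - x k| := le_abs_self _)
    hAcL hBcL
  rw [← hAdef, ← hBdef] at hRight hLeft
  -- reduce the EReal goal to a real goal
  have hrealbound : ∑ j : Fin N, ∑ k : Fin N,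
      (if x j ∈ Set.Icc (-(ℓ : ℝ) * lam) r ∧ x k ∉ Set.Icc (-(ℓ : ℝ) * lam) r
        then g |x j - x k| else 0) ≤ C * γ * M := by
    set PAll : Finset (Fin N × Fin N) := (Finset.univ ×ˢ Finset.univ).filter
      (fun jk => x jk.1 ∈ Set.Icc (-(ℓ : ℝ) * lam) r ∧
        x jk.2 ∉ Set.Icc (-(ℓ : ℝ) * lam) r) with hPAll
    have hconv : ∑ j : Fin N, ∑ k : Fin N,
        (if x j ∈ Set.Icc (-(ℓ : ℝ) * lam) r ∧ x k ∉ Set.Icc (-(ℓ : ℝ) * lam) r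
          then g |x j - x k| else 0) = ∑ jk ∈ PAll, g |x jk.1 - x jk.2| := by
      rw [hPAll, Finset.sum_filter]
      exact (Finset.sum_product' (s := Finset.univ) (t := Finset.univ)
        (f := fun j k => if x j ∈ Set.Icc (-(ℓ : ℝ) * lam) r ∧
          x k ∉ Set.Icc (-(ℓ : ℝ) * lam) r then g |x j - x k| else 0)).symm
    have hsubsetRL : PAll ⊆ PR ∪ PL := by
      intro jk hjk
      rw [hPAll, Finset.mem_filter] at hjk
      obtain ⟨hu, h1, h2⟩ := hjk
      rw [Finset.mem_union, hPR, hPL, Finset.mem_filter, Finset.mem_filter]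
      rw [Set.mem_Icc] at h2
      rcases not_and_or.1 h2 with h3 | h3
      · right; exact ⟨hu, h1, not_le.1 h3⟩
      · left; exact ⟨hu, h1, not_le.1 h3⟩
    have hdisjRL : Disjoint PR PL := by
      rw [Finset.disjoint_left]
      intro jk hjk hjk2
      rw [hPR, Finset.mem_filter] at hjk
      rw [hPL, Finset.mem_filter] at hjk2
      have := hjk.2.2
      have := hjk2.2.2
      linarith
    have hMγ : (0:ℝ) ≤ (M : ℝ) * (γ : ℝ) :=
      mul_nonneg (Nat.cast_nonneg M) (Nat.cast_nonneg γ)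
    calc ∑ j : Fin N, ∑ k : Fin N,
        (if x j ∈ Set.Icc (-(ℓ : ℝ) * lam) r ∧ x k ∉ Set.Icc (-(ℓ : ℝ) * lam) r
          then g |x j - x k| else 0)
        = ∑ jk ∈ PAll, g |x jk.1 - x jk.2| := hconv
      _ ≤ ∑ jk ∈ PR ∪ PL, g |x jk.1 - x jk.2| :=
          Finset.sum_le_sum_of_subset_of_nonneg hsubsetRL
            (fun jk _ _ => hg_nonneg _ (abs_nonneg _))
      _ = (∑ jk ∈ PR, g |x jk.1 - x jk.2|) + ∑ jk ∈ PL, g |x jk.1 - x jk.2| :=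
          Finset.sum_union hdisjRL
      _ ≤ (M : ℝ) * γ * (10 * A + 4 * B) + (M : ℝ) * γ * (10 * A + 4 * B) :=
          add_le_add hRight hLeft
      _ ≤ C * γ * M := by rw [hC]; nlinarith [hMγ, hA0, hB0]
  -- the EReal estimate
  refine le_trans ?_ (ereal_sum_le Finset.univ
    (fun j => ∑ k : Fin N,
      (if x j ∈ Set.Icc (-(ℓ : ℝ) * lam) r ∧ x k ∉ Set.Icc (-(ℓ : ℝ) * lam) r
        then -(g |x j - x k|) else 0)) _ ?_)
  · rw [EReal.coe_le_coe_iff]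
    have hneg : ∀ j k : Fin N,
        (if x j ∈ Set.Icc (-(ℓ : ℝ) * lam) r ∧ x k ∉ Set.Icc (-(ℓ : ℝ) * lam) r
          then -(g |x j - x k|) else 0)
        = -(if x j ∈ Set.Icc (-(ℓ : ℝ) * lam) r ∧ x k ∉ Set.Icc (-(ℓ : ℝ) * lam) r
          then g |x j - x k| else 0) := by
      intro j k
      by_cases h : x j ∈ Set.Icc (-(ℓ : ℝ) * lam) r ∧ x k ∉ Set.Icc (-(ℓ : ℝ) * lam) r
      · rw [if_pos h, if_pos h]
      · rw [if_neg h, if_neg h, neg_zero]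
    calc -(C * ↑γ * ↑M)
        ≤ -(∑ j : Fin N, ∑ k : Fin N,
            (if x j ∈ Set.Icc (-(ℓ : ℝ) * lam) r ∧ x k ∉ Set.Icc (-(ℓ : ℝ) * lam) r
              then g |x j - x k| else 0)) := neg_le_neg hrealbound
      _ = ∑ j : Fin N, ∑ k : Fin N,
            (if x j ∈ Set.Icc (-(ℓ : ℝ) * lam) r ∧ x k ∉ Set.Icc (-(ℓ : ℝ) * lam) r
              then -(g |x j - x k|) else 0) := by
          rw [← Finset.sum_neg_distrib]
          apply Finset.sum_congr rfl
          intro j _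
          rw [← Finset.sum_neg_distrib]
          exact Finset.sum_congr rfl (fun k _ => (hneg j k).symm)
  · intro j _
    refine ereal_sum_le Finset.univ _ _ ?_
    intro k _
    by_cases h : x j ∈ Set.Icc (-(ℓ : ℝ) * lam) r ∧ x k ∉ Set.Icc (-(ℓ : ℝ) * lam) r
    · rw [if_pos h, if_pos h]
      apply hVlow
      rw [abs_pos, sub_ne_zero]
      intro he
      exact h.2 (he ▸ h.1)
    · rw [if_neg h, if_neg h]
      simp
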